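/- arXiv:2002.02892 — 3 statements merged into one kernel-verified Lean document; each statement's English description precedes it below -/
import Mathlib

section
/- Let P = ΘBΘᵀ and P' = Θ'B(Θ')ᵀ be two SBM connection probability matrices with the same connectivity matrix B = α B₀ where entries of B₀ lie in [0,1], community sizes at most n_max, and suppose only the nodes in a set S changed community between Θ and Θ'. If max_k ∑_ℓ n_ℓ (B₀)_{kℓ}² ≤ n̄_max for all admissible size vectors, then ‖P - P'‖_F² ≤ 8 |S| α² n̄_max. -/
theorem stmt_8 (n K : ℕ) (α : ℝ) (hα0 : 0 < α) (hα1 : α < 1)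
    (B₀ : Matrix (Fin K) (Fin K) ℝ) (hB₀sym : B₀.IsSymm)
    (hB₀ : ∀ k l, B₀ k l ∈ Set.Icc (0 : ℝ) 1)
    (Θ Θ' : Fin n → Fin K)
    (nbar : ℝ)
    (hbar : ∀ k, (∑ j, (B₀ k (Θ j)) ^ 2) ≤ nbar)
    (hbar' : ∀ k, (∑ j, (B₀ k (Θ' j)) ^ 2) ≤ nbar)
    (S : Finset (Fin n)) (hS : ∀ i, Θ i ≠ Θ' i → i ∈ S) :
    ∑ i, ∑ j, (α * B₀ (Θ i) (Θ j) - α * B₀ (Θ' i) (Θ' j)) ^ 2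
      ≤ 8 * (S.card : ℝ) * α ^ 2 * nbar := by
  have hsq : ∀ a b : ℝ, (a - b) ^ 2 ≤ 2 * a ^ 2 + 2 * b ^ 2 := by
    intro a b; nlinarith [sq_nonneg (a + b)]
  set f : Fin n → Fin n → ℝ :=
    fun i j => (B₀ (Θ i) (Θ j) - B₀ (Θ' i) (Θ' j)) ^ 2 with hf
  have hnn : ∀ i j, 0 ≤ f i j := fun i j => sq_nonneg _
  have hzero : ∀ i j, i ∉ S → j ∉ S → f i j = 0 := by
    intro i j hi hj
    have hΘi : Θ i = Θ' i := by by_contra h; exact hi (hS i h)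
    have hΘj : Θ j = Θ' j := by by_contra h; exact hj (hS j h)
    simp [hf, hΘi, hΘj]
  -- row bound
  have hrow : ∀ i, ∑ j, f i j ≤ 4 * nbar := by
    intro i
    calc ∑ j, f i j
        ≤ ∑ j, (2 * (B₀ (Θ i) (Θ j)) ^ 2 + 2 * (B₀ (Θ' i) (Θ' j)) ^ 2) :=
          Finset.sum_le_sum fun j _ => hsq _ _
      _ = 2 * (∑ j, (B₀ (Θ i) (Θ j)) ^ 2) + 2 * (∑ j, (B₀ (Θ' i) (Θ' j)) ^ 2) := by
          rw [Finset.sum_add_distrib, Finset.mul_sum, Finset.mul_sum]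
      _ ≤ 2 * nbar + 2 * nbar := by
          have h1 := hbar (Θ i); have h2 := hbar' (Θ' i); linarith
      _ = 4 * nbar := by ring
  have hsymm : ∀ a b, B₀ a b = B₀ b a := fun a b => (hB₀sym.apply a b).symm
  have hcol : ∀ j, ∑ i, f i j ≤ 4 * nbar := by
    intro j
    have : ∀ i, f i j = (B₀ (Θ j) (Θ i) - B₀ (Θ' j) (Θ' i)) ^ 2 := by
      intro i; rw [hf]; dsimp only; rw [hsymm (Θ i) (Θ j), hsymm (Θ' i) (Θ' j)]
    calc ∑ i, f i j = ∑ i, (B₀ (Θ j) (Θ i) - B₀ (Θ' j) (Θ' i)) ^ 2 := by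
          exact Finset.sum_congr rfl fun i _ => this i
      _ ≤ ∑ i, (2 * (B₀ (Θ j) (Θ i)) ^ 2 + 2 * (B₀ (Θ' j) (Θ' i)) ^ 2) :=
          Finset.sum_le_sum fun i _ => hsq _ _
      _ = 2 * (∑ i, (B₀ (Θ j) (Θ i)) ^ 2) + 2 * (∑ i, (B₀ (Θ' j) (Θ' i)) ^ 2) := by
          rw [Finset.sum_add_distrib, Finset.mul_sum, Finset.mul_sum]
      _ ≤ 2 * nbar + 2 * nbar := by
          have h1 := hbar (Θ j); have h2 := hbar' (Θ' j); linarith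
      _ = 4 * nbar := by ring
  -- main splitting bound
  have hmain : ∑ i, ∑ j, f i j ≤ 8 * (S.card : ℝ) * nbar := by
    have hsplit : ∑ i, ∑ j, f i j
        = ∑ i ∈ S, ∑ j, f i j + ∑ i ∈ Sᶜ, ∑ j, f i j := by
      rw [← Finset.sum_add_sum_compl S]
    have h2 : ∑ i ∈ Sᶜ, ∑ j, f i j ≤ ∑ j ∈ S, ∑ i, f i j := by
      calc ∑ i ∈ Sᶜ, ∑ j, f i j = ∑ i ∈ Sᶜ, ∑ j ∈ S, f i j := by
            refine Finset.sum_congr rfl fun i hi => ?_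
            rw [← Finset.sum_add_sum_compl S (f i)]
            have : ∑ j ∈ Sᶜ, f i j = 0 :=
              Finset.sum_eq_zero fun j hj =>
                hzero i j (Finset.mem_compl.mp hi) (Finset.mem_compl.mp hj)
            rw [this, add_zero]
        _ ≤ ∑ i, ∑ j ∈ S, f i j := by
            refine Finset.sum_le_sum_of_subset_of_nonneg (Finset.subset_univ _)
              fun i _ _ => Finset.sum_nonneg fun j _ => hnn i j
        _ = ∑ j ∈ S, ∑ i, f i j := Finset.sum_comm
    have h1 : ∑ i ∈ S, ∑ j, f i j ≤ (S.card : ℝ) * (4 * nbar) := by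
      calc ∑ i ∈ S, ∑ j, f i j ≤ ∑ _i ∈ S, 4 * nbar :=
            Finset.sum_le_sum fun i _ => hrow i
        _ = (S.card : ℝ) * (4 * nbar) := by rw [Finset.sum_const, nsmul_eq_mul]
    have h3 : ∑ j ∈ S, ∑ i, f i j ≤ (S.card : ℝ) * (4 * nbar) := by
      calc ∑ j ∈ S, ∑ i, f i j ≤ ∑ _j ∈ S, 4 * nbar :=
            Finset.sum_le_sum fun j _ => hcol j
        _ = (S.card : ℝ) * (4 * nbar) := by rw [Finset.sum_const, nsmul_eq_mul]
    rw [hsplit]; nlinarith [h1, h2, h3]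
  have hfact : ∑ i, ∑ j, (α * B₀ (Θ i) (Θ j) - α * B₀ (Θ' i) (Θ' j)) ^ 2
      = α ^ 2 * ∑ i, ∑ j, f i j := by
    rw [Finset.mul_sum]
    refine Finset.sum_congr rfl fun i _ => ?_
    rw [Finset.mul_sum]
    exact Finset.sum_congr rfl fun j _ => by rw [hf]; ring
  rw [hfact]
  have : α ^ 2 * (∑ i, ∑ j, f i j) ≤ α ^ 2 * (8 * (S.card : ℝ) * nbar) :=
    mul_le_mul_of_nonneg_left hmain (sq_nonneg α)
  linarith
end

section
/- Let A, P be symmetric n×n matrices with nonnegative entries, with strictly positive row sums d_i = ∑_j a_{ij} and d^P_i = ∑_j p_{ij}, and let d_min = min over i of min(d_i, d^P_i). Define L(M) = D(M)^{-1/2} M D(M)^{-1/2} where D(M) is the diagonal matrix of row sums. Then ‖L(A) - L(P)‖ ≤ ‖A - P‖/d_min + ‖(D(A) - D(P))P‖/d_min² in operator norm. -/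
set_option maxHeartbeats 1000000
open scoped Matrix.Norms.L2Operator
open Matrix

noncomputable def opNorm {n : ℕ} (M : Matrix (Fin n) (Fin n) ℝ) : ℝ :=
  ‖(Matrix.toEuclideanCLM (𝕜 := ℝ) M : EuclideanSpace ℝ (Fin n) →L[ℝ] EuclideanSpace ℝ (Fin n))‖

noncomputable def rowSum {n : ℕ} (M : Matrix (Fin n) (Fin n) ℝ) (i : Fin n) : ℝ := ∑ j, M i j

noncomputable def degMat {n : ℕ} (M : Matrix (Fin n) (Fin n) ℝ) : Matrix (Fin n) (Fin n) ℝ :=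
  Matrix.diagonal (rowSum M)

noncomputable def normLap {n : ℕ} (M : Matrix (Fin n) (Fin n) ℝ) : Matrix (Fin n) (Fin n) ℝ :=
  Matrix.diagonal (fun i => (Real.sqrt (rowSum M i))⁻¹) * M *
    Matrix.diagonal (fun i => (Real.sqrt (rowSum M i))⁻¹)

lemma opNorm_eq {n : ℕ} (M : Matrix (Fin n) (Fin n) ℝ) : opNorm M = ‖M‖ := rfl

lemma diag_opNorm_le {n : ℕ} (d : Fin n → ℝ) (c : ℝ) (hc : 0 ≤ c) (h : ∀ i, |d i| ≤ c) :
    ‖(Matrix.diagonal d : Matrix (Fin n) (Fin n) ℝ)‖ ≤ c := by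
  rw [Matrix.l2_opNorm_def]
  refine ContinuousLinearMap.opNorm_le_bound _ hc fun x => ?_
  have hx : ((Matrix.toEuclideanLin.trans LinearMap.toContinuousLinearMap) (Matrix.diagonal d)) x
      = (EuclideanSpace.equiv (Fin n) ℝ).symm (Matrix.diagonal d *ᵥ x) := rfl
  rw [hx]
  rw [EuclideanSpace.norm_eq, EuclideanSpace.norm_eq]
  rw [show c * Real.sqrt (∑ i, ‖x i‖ ^ 2) = Real.sqrt (c^2 * ∑ i, ‖x i‖ ^ 2) by
    rw [Real.sqrt_mul (by positivity), Real.sqrt_sq hc]]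
  apply Real.sqrt_le_sqrt
  rw [Finset.mul_sum]
  apply Finset.sum_le_sum
  intro i _
  have he : ((EuclideanSpace.equiv (Fin n) ℝ).symm (Matrix.diagonal d *ᵥ x)) i = d i * x i := by
    simp [Matrix.mulVec_diagonal]
  rw [he]
  have h1 : |d i * x i| ≤ c * |x i| := by
    rw [abs_mul]; exact mul_le_mul_of_nonneg_right (h i) (abs_nonneg _)
  calc ‖d i * x i‖ ^ 2 = |d i * x i| ^ 2 := rfl
    _ ≤ (c * |x i|) ^ 2 := by apply pow_le_pow_left₀ (abs_nonneg _) h1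
    _ = c ^ 2 * ‖x i‖ ^ 2 := by rw [mul_pow]; rfl

lemma aux_scalar (sa sb : ℝ) (hsa : 0 < sa) (hsb : 0 < sb) :
    sa⁻¹ - sb⁻¹ = ((sa * sb) * (sa + sb))⁻¹ * (sb ^ 2 - sa ^ 2) := by
  field_simp
  ring

lemma sqrt_inv_sub {a b : ℝ} (ha : 0 < a) (hb : 0 < b) :
    (Real.sqrt a)⁻¹ - (Real.sqrt b)⁻¹ =
      ((Real.sqrt a * Real.sqrt b) * (Real.sqrt a + Real.sqrt b))⁻¹ * (b - a) := by
  have := aux_scalar (Real.sqrt a) (Real.sqrt b) (Real.sqrt_pos.mpr ha) (Real.sqrt_pos.mpr hb)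
  rwa [Real.sq_sqrt hb.le, Real.sq_sqrt ha.le] at this

lemma decomp {n : ℕ} (A P S T : Matrix (Fin n) (Fin n) ℝ) :
    S * A * S - T * P * T = S * (A - P) * S + (S - T) * P * S + T * P * (S - T) := by
  noncomm_ring

lemma transpose_opNorm {n : ℕ} (M : Matrix (Fin n) (Fin n) ℝ) : ‖Mᵀ‖ = ‖M‖ := by
  have : Mᵀ = Mᴴ := by ext i j; simp [Matrix.conjTranspose_apply]
  rw [this, Matrix.l2_opNorm_conjTranspose]

theorem stmt_9 (n : ℕ) (A P : Matrix (Fin n) (Fin n) ℝ)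
    (hAsym : A.IsSymm) (hPsym : P.IsSymm)
    (hAnn : ∀ i j, 0 ≤ A i j) (hPnn : ∀ i j, 0 ≤ P i j)
    (dmin : ℝ) (hdmin : 0 < dmin)
    (hA : ∀ i, dmin ≤ rowSum A i) (hP : ∀ i, dmin ≤ rowSum P i) :
    opNorm (normLap A - normLap P) ≤
      opNorm (A - P) / dmin + opNorm ((degMat A - degMat P) * P) / dmin ^ 2 := by
  have haP : ∀ i, 0 < rowSum A i := fun i => lt_of_lt_of_le hdmin (hA i)
  have hbP : ∀ i, 0 < rowSum P i := fun i => lt_of_lt_of_le hdmin (hP i)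
  set s := Real.sqrt dmin with hs
  have hs0 : 0 < s := Real.sqrt_pos.mpr hdmin
  have hs2 : s ^ 2 = dmin := Real.sq_sqrt hdmin.le
  set S : Matrix (Fin n) (Fin n) ℝ :=
    Matrix.diagonal (fun i => (Real.sqrt (rowSum A i))⁻¹) with hSdef
  set T : Matrix (Fin n) (Fin n) ℝ :=
    Matrix.diagonal (fun i => (Real.sqrt (rowSum P i))⁻¹) with hTdef
  set W : Matrix (Fin n) (Fin n) ℝ :=
    Matrix.diagonal (fun i =>
      ((Real.sqrt (rowSum A i) * Real.sqrt (rowSum P i)) *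
        (Real.sqrt (rowSum A i) + Real.sqrt (rowSum P i)))⁻¹) with hWdef
  -- key diagonal identity
  have hST : S - T = W * (degMat P - degMat A) := by
    rw [hSdef, hTdef, hWdef, degMat, degMat, Matrix.diagonal_sub,
      Matrix.diagonal_sub, Matrix.diagonal_mul_diagonal]
    exact congrArg Matrix.diagonal (funext fun i => sqrt_inv_sub (haP i) (hbP i))
  have hST' : S - T = (degMat P - degMat A) * W := by
    rw [hST, hWdef, degMat, degMat, Matrix.diagonal_sub, Matrix.diagonal_mul_diagonal,
      Matrix.diagonal_mul_diagonal]
    exact congrArg Matrix.diagonal (funext fun i => by ring)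
  -- norm bounds on diagonals
  have hSn : ‖S‖ ≤ s⁻¹ := by
    apply diag_opNorm_le _ _ (by positivity)
    intro i
    rw [abs_of_nonneg (by positivity)]
    exact inv_anti₀ hs0 (Real.sqrt_le_sqrt (hA i))
  have hTn : ‖T‖ ≤ s⁻¹ := by
    apply diag_opNorm_le _ _ (by positivity)
    intro i
    rw [abs_of_nonneg (by positivity)]
    exact inv_anti₀ hs0 (Real.sqrt_le_sqrt (hP i))
  have hWn : ‖W‖ ≤ (dmin * (2 * s))⁻¹ := by
    apply diag_opNorm_le _ _ (by positivity)
    intro i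
    have h1 : s ≤ Real.sqrt (rowSum A i) := Real.sqrt_le_sqrt (hA i)
    have h2 : s ≤ Real.sqrt (rowSum P i) := Real.sqrt_le_sqrt (hP i)
    rw [abs_of_nonneg (by positivity)]
    apply inv_anti₀ (by positivity)
    have hd : dmin ≤ Real.sqrt (rowSum A i) * Real.sqrt (rowSum P i) := by
      nlinarith
    nlinarith
  -- decomposition
  have e1 : normLap A = S * A * S := rfl
  have e2 : normLap P = T * P * T := rfl
  have hdec : normLap A - normLap P =
      S * (A - P) * S + (S - T) * P * S + T * P * (S - T) := by
    rw [e1, e2]; exact decomp A P S T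
  set X : Matrix (Fin n) (Fin n) ℝ := (degMat A - degMat P) * P with hXdef
  have hXflip : (degMat P - degMat A) * P = -X := by
    rw [hXdef, ← neg_sub (degMat A) (degMat P), Matrix.neg_mul]
  have hPDnorm : ‖P * (degMat P - degMat A)‖ = ‖X‖ := by
    have ht : (P * (degMat P - degMat A))ᵀ = (degMat P - degMat A) * P := by
      rw [Matrix.transpose_mul, hPsym.eq]
      congr 1
      rw [degMat, degMat, Matrix.transpose_sub, Matrix.diagonal_transpose,
        Matrix.diagonal_transpose]
    rw [← transpose_opNorm, ht, hXflip, norm_neg]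
  -- bound each term
  have t1 : ‖S * (A - P) * S‖ ≤ s⁻¹ * ‖A - P‖ * s⁻¹ := by
    calc ‖S * (A - P) * S‖ ≤ ‖S * (A - P)‖ * ‖S‖ := norm_mul_le _ _
      _ ≤ ‖S‖ * ‖A - P‖ * ‖S‖ := by gcongr; exact norm_mul_le _ _
      _ ≤ s⁻¹ * ‖A - P‖ * s⁻¹ := by gcongr
  have t2 : ‖(S - T) * P * S‖ ≤ (dmin * (2 * s))⁻¹ * ‖X‖ * s⁻¹ := by
    have : (S - T) * P * S = W * -X * S := by
      rw [hST, ← hXflip]; simp only [Matrix.mul_assoc]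
    rw [this]
    calc ‖W * -X * S‖ ≤ ‖W * -X‖ * ‖S‖ := norm_mul_le _ _
      _ ≤ ‖W‖ * ‖X‖ * ‖S‖ := by
          have := norm_mul_le W (-X)
          rw [norm_neg] at this
          gcongr
      _ ≤ (dmin * (2 * s))⁻¹ * ‖X‖ * s⁻¹ := by gcongr
  have t3 : ‖T * P * (S - T)‖ ≤ s⁻¹ * ‖X‖ * (dmin * (2 * s))⁻¹ := by
    have : T * P * (S - T) = T * (P * (degMat P - degMat A)) * W := by
      rw [hST']; simp only [Matrix.mul_assoc]
    rw [this]
    calc ‖T * (P * (degMat P - degMat A)) * W‖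
        ≤ ‖T * (P * (degMat P - degMat A))‖ * ‖W‖ := norm_mul_le _ _
      _ ≤ ‖T‖ * ‖X‖ * ‖W‖ := by
          have h := norm_mul_le T (P * (degMat P - degMat A))
          rw [hPDnorm] at h
          gcongr
      _ ≤ s⁻¹ * ‖X‖ * (dmin * (2 * s))⁻¹ := by gcongr
  -- combine
  rw [opNorm_eq, opNorm_eq, opNorm_eq, hdec]
  have tri : ‖S * (A - P) * S + (S - T) * P * S + T * P * (S - T)‖ ≤
      ‖S * (A - P) * S‖ + ‖(S - T) * P * S‖ + ‖T * P * (S - T)‖ :=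
    le_trans (norm_add_le _ _) (by gcongr; exact norm_add_le _ _)
  have final : s⁻¹ * ‖A - P‖ * s⁻¹ + (dmin * (2 * s))⁻¹ * ‖X‖ * s⁻¹ +
      s⁻¹ * ‖X‖ * (dmin * (2 * s))⁻¹ = ‖A - P‖ / dmin + ‖X‖ / dmin ^ 2 := by
    rw [show dmin = s ^ 2 from hs2.symm]
    field_simp
    ring
  linarith [tri, t1, t2, t3]
end

section
/- Under the Markov DSBM membership dynamics where each node independently stays in its community with probability (1-ε)^k after k steps (at least), if a_1,...,a_n are i.i.d. Bernoulli((1-ε)^k) indicators, then for any δ > 0, P((1/n)∑ a_i ≤ (1-ε)^k - δ) ≤ 2 exp(-2δ²n), and consequently with this probability ‖P_{t-k} - P_t‖_F² ≤ 8 α² n² ((1 - (1-ε)^k) + δ). -/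
open MeasureTheory ProbabilityTheory Real


lemma tanh_aux {t : ℝ} (ht : t ≤ 0) : 4 * (1 - exp (t/2)) ≤ -t * (1 + exp (t/2)) := by
  set F : ℝ → ℝ := fun t => -t * (1 + exp (t/2)) - 4 * (1 - exp (t/2)) with hF
  have hderiv : ∀ x : ℝ, HasDerivAt F (exp (x/2) * (1 - x/2) - 1) x := by
    intro x
    have he : HasDerivAt (fun y : ℝ => exp (y/2)) (exp (x/2) / 2) x := by
      simpa [div_eq_mul_inv] using (((hasDerivAt_id x).div_const 2).exp (x := x))
    have h1 : HasDerivAt (fun y : ℝ => -y * (1 + exp (y/2)))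
        (-1 * (1 + exp (x/2)) + -x * (exp (x/2)/2)) x :=
      ((hasDerivAt_id x).neg.mul (he.const_add 1))
    have h2 : HasDerivAt (fun y : ℝ => 4 * (1 - exp (y/2))) (4 * (-(exp (x/2)/2))) x :=
      ((he.neg.const_add 1).const_mul 4)
    have := h1.sub h2
    exact this.congr_deriv (by ring)
  have hmono : AntitoneOn F (Set.Iic 0) := by
    apply antitoneOn_of_deriv_nonpos (convex_Iic 0)
    · exact fun x _ => ((hderiv x).differentiableAt).continuousAt.continuousWithinAt
    · exact fun x _ => ((hderiv x).differentiableAt).differentiableWithinAt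
    · intro x hx
      rw [(hderiv x).deriv]
      have h1 : 1 - x/2 ≤ exp (-(x/2)) := by
        have := Real.add_one_le_exp (-(x/2)); linarith
      have h2 : exp (x/2) * (1 - x/2) ≤ exp (x/2) * exp (-(x/2)) :=
        mul_le_mul_of_nonneg_left h1 (exp_pos _).le
      rw [← Real.exp_add] at h2
      simp at h2
      linarith
  have h0 : F t ≥ F 0 := by
    have := hmono (Set.mem_Iic.2 ht) (Set.mem_Iic.2 le_rfl) ht
    exact this
  have : F 0 = 0 := by simp [hF]
  have hFt : 0 ≤ F t := by linarith
  simp only [hF] at hFt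
  linarith

lemma bern_mgf_le {p t : ℝ} (hp0 : 0 ≤ p) (hp1 : p ≤ 1) (ht : t ≤ 0) :
    1 - p + p * exp t ≤ exp (t * p + t ^ 2 / 8) := by
  have hs : ∀ x : ℝ, 0 < 1 - p + p * exp x := by
    intro x
    rcases eq_or_lt_of_le hp1 with h | h
    · simp [← h]; positivity
    · have := exp_pos x; nlinarith
  set G : ℝ → ℝ := fun t => t * p + t ^ 2 / 8 - Real.log (1 - p + p * exp t) with hG
  have hderiv : ∀ x : ℝ, HasDerivAt G
      (p + 2 * x / 8 - (p * exp x) / (1 - p + p * exp x)) x := by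
    intro x
    have h1 : HasDerivAt (fun y : ℝ => y * p + y ^ 2 / 8) (p + 2 * x / 8) x := by
      have := ((hasDerivAt_id x).mul_const p).add ((hasDerivAt_pow 2 x).div_const 8)
      exact this.congr_deriv (by simp)
    have h2 : HasDerivAt (fun y : ℝ => Real.log (1 - p + p * exp y))
        ((p * exp x) / (1 - p + p * exp x)) x := by
      have he : HasDerivAt (fun y : ℝ => 1 - p + p * exp y) (p * exp x) x :=
        (((Real.hasDerivAt_exp x).const_mul p).const_add (1 - p))
      exact he.log (hs x).ne'
    exact h1.sub h2
  have hG' : ∀ x : ℝ, x ≤ 0 → p + 2 * x / 8 - (p * exp x) / (1 - p + p * exp x) ≤ 0 := by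
    intro x hx
    set v := exp (x/2) with hv
    have hv0 : 0 < v := exp_pos _
    have hv1 : v ≤ 1 := exp_le_one_iff.2 (by linarith)
    have hex : exp x = v ^ 2 := by
      rw [hv, sq, ← Real.exp_add, add_halves]
    have hsx := hs x
    -- p - p e^x / s = p(1-p)(1-e^x)/s
    have key1 : p - (p * exp x) / (1 - p + p * exp x)
        = p * (1 - p) * (1 - exp x) / (1 - p + p * exp x) := by
      field_simp
      ring
    -- p(1-p)(1-e^x)(1+v) ≤ (1-v) s
    have key2 : p * (1 - p) * (1 - exp x) * (1 + v) ≤ (1 - v) * (1 - p + p * exp x) := by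
      rw [hex]
      nlinarith [sq_nonneg ((1 - p) - p * v), hv0, hv1, hp0, hp1, sq_nonneg v]
    have key3 : p * (1 - p) * (1 - exp x) / (1 - p + p * exp x) ≤ (1 - v) / (1 + v) := by
      rw [div_le_div_iff₀ hsx (by linarith)]
      linarith [key2]
    have key4 : 4 * (1 - v) ≤ -x * (1 + v) := tanh_aux hx
    have key5 : (1 - v) / (1 + v) ≤ -x / 4 := by
      rw [div_le_div_iff₀ (by linarith) (by norm_num)]
      linarith
    rw [sub_eq_add_neg, ← sub_eq_add_neg] at *
    have := key1
    nlinarith [key3, key5]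
  have hmono : AntitoneOn G (Set.Iic 0) := by
    apply antitoneOn_of_deriv_nonpos (convex_Iic 0)
    · exact fun x _ => ((hderiv x).differentiableAt).continuousAt.continuousWithinAt
    · exact fun x _ => ((hderiv x).differentiableAt).differentiableWithinAt
    · intro x hx
      rw [(hderiv x).deriv]
      exact hG' x (le_of_lt (by simpa using hx))
  have h0 : G 0 ≤ G t := hmono (Set.mem_Iic.2 ht) (Set.mem_Iic.2 le_rfl) ht
  have hG0 : G 0 = 0 := by simp [hG]
  have : Real.log (1 - p + p * exp t) ≤ t * p + t ^ 2 / 8 := by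
    simp only [hG] at h0
    have h1 : (1:ℝ) - p + p * exp 0 = 1 := by simp
    rw [h1, Real.log_one] at h0
    linarith
  calc 1 - p + p * exp t = exp (Real.log (1 - p + p * exp t)) := (Real.exp_log (hs t)).symm
  _ ≤ exp (t * p + t ^ 2 / 8) := exp_le_exp.2 this


theorem stmt_12 {Ω : Type*} [MeasurableSpace Ω] (Pr : Measure Ω) [IsProbabilityMeasure Pr]
    (n k : ℕ) (ε : ℝ) (hε0 : 0 ≤ ε) (hε1 : ε ≤ 1)
    (a : Fin n → Ω → ℝ)
    (hval : ∀ i ω, a i ω = 0 ∨ a i ω = 1)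
    (hmeas : ∀ i, Measurable (a i))
    (hind : iIndepFun a Pr)
    (hpa : ∀ i, Pr {ω | a i ω = 1} = ENNReal.ofReal ((1 - ε) ^ k))
    (δ : ℝ) (hδ : 0 < δ)
    (α : ℝ) (hα : 0 ≤ α)
    (P₁ P₂ : Ω → Matrix (Fin n) (Fin n) ℝ)
    (hP₁ : ∀ ω i j, 0 ≤ P₁ ω i j ∧ P₁ ω i j ≤ α)
    (hP₂ : ∀ ω i j, 0 ≤ P₂ ω i j ∧ P₂ ω i j ≤ α)
    (hagree : ∀ ω i j, a i ω = 1 → a j ω = 1 → P₁ ω i j = P₂ ω i j) :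
    Pr {ω | (1 / (n : ℝ)) * ∑ i, a i ω ≤ (1 - ε) ^ k - δ} ≤
        ENNReal.ofReal (2 * Real.exp (-2 * δ ^ 2 * n)) ∧
      Pr {ω | ¬ (∑ i, ∑ j, (P₁ ω i j - P₂ ω i j) ^ 2 ≤
          8 * α ^ 2 * (n : ℝ) ^ 2 * ((1 - (1 - ε) ^ k) + δ))} ≤
        ENNReal.ofReal (2 * Real.exp (-2 * δ ^ 2 * n)) := by
  set p : ℝ := (1 - ε) ^ k with hpdef
  have hp0 : 0 ≤ p := pow_nonneg (by linarith) k
  have hp1 : p ≤ 1 := pow_le_one₀ (by linarith) (by linarith)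
  have h₁ : Pr {ω | (1 / (n : ℝ)) * ∑ i, a i ω ≤ p - δ} ≤
      ENNReal.ofReal (2 * Real.exp (-2 * δ ^ 2 * n)) := by
    rcases Nat.eq_zero_or_pos n with hn0 | hnpos
    · subst hn0
      have h2 : ENNReal.ofReal (2 * Real.exp (-2 * δ ^ 2 * (0:ℕ))) = ENNReal.ofReal 2 := by
        norm_num
      rw [h2]
      exact le_trans prob_le_one (ENNReal.one_le_ofReal.2 (by norm_num))
    · have hnR : (0:ℝ) < n := by exact_mod_cast hnpos
      set t₀ : ℝ := -(4 * δ) with ht₀def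
      have ht₀ : t₀ ≤ 0 := by rw [ht₀def]; linarith
      have ha_eq : ∀ i, (fun ω => Real.exp (t₀ * a i ω))
          = fun ω => 1 + (Real.exp t₀ - 1) * a i ω := by
        intro i
        funext ω
        rcases hval i ω with h | h <;> simp [h]
      have haind : ∀ i, a i = Set.indicator ((a i) ⁻¹' {1}) (fun _ => (1:ℝ)) := by
        intro i
        funext ω
        by_cases h : a i ω = 1
        · simp [Set.indicator, h]
        · have h0 : a i ω = 0 := (hval i ω).resolve_right h
          simp [Set.indicator, h, h0]
      have hSmeas : ∀ i, MeasurableSet ((a i) ⁻¹' ({1} : Set ℝ)) :=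
        fun i => (hmeas i) (measurableSet_singleton 1)
      have haInt : ∀ i, Integrable (a i) Pr := by
        intro i
        rw [haind i]
        exact (integrable_const (1:ℝ)).indicator (hSmeas i)
      have hPrS : ∀ i, Pr ((a i) ⁻¹' ({1} : Set ℝ)) = ENNReal.ofReal p := by
        intro i
        have : (a i) ⁻¹' ({1} : Set ℝ) = {ω | a i ω = 1} := rfl
        rw [this, hpa i]
      have haInt' : ∀ i, ∫ ω, a i ω ∂Pr = p := by
        intro i
        have h1 : ∫ ω, a i ω ∂Pr
            = ∫ ω, Set.indicator ((a i) ⁻¹' {1}) (fun _ => (1:ℝ)) ω ∂Pr := by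
          rw [← haind i]
        rw [h1, MeasureTheory.integral_indicator_const (1:ℝ) (hSmeas i), measureReal_def, hPrS i,
          ENNReal.toReal_ofReal hp0, smul_eq_mul, mul_one]
      have hInt_exp : ∀ i, Integrable (fun ω => Real.exp (t₀ * a i ω)) Pr := by
        intro i
        rw [ha_eq i]
        exact (integrable_const (1:ℝ)).add ((haInt i).const_mul _)
      have hmgf : ∀ i, mgf (a i) Pr t₀ = 1 - p + p * Real.exp t₀ := by
        intro i
        rw [mgf, ha_eq i,
          MeasureTheory.integral_add (integrable_const (1:ℝ)) ((haInt i).const_mul _),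
          MeasureTheory.integral_const, MeasureTheory.integral_const_mul, haInt' i]
        simp
        ring
      have hXint : Integrable (fun ω => Real.exp (t₀ * (∑ i, a i) ω)) Pr :=
        hind.integrable_exp_mul_sum hmeas (fun i _ => hInt_exp i)
      have hmgfX : mgf (∑ i, a i) Pr t₀ = (1 - p + p * Real.exp t₀) ^ n := by
        rw [hind.mgf_sum hmeas, Finset.prod_congr rfl (fun i _ => hmgf i),
          Finset.prod_const, Finset.card_univ, Fintype.card_fin]
      have hch := measure_le_le_exp_mul_mgf (μ := Pr) (X := ∑ i, a i) (t := t₀)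
        ((p - δ) * n) ht₀ hXint
      rw [hmgfX] at hch
      have hs0 : 0 ≤ 1 - p + p * Real.exp t₀ := by
        have := Real.exp_pos t₀
        nlinarith
      have hbound : Real.exp (-t₀ * ((p - δ) * n)) * (1 - p + p * Real.exp t₀) ^ n
          ≤ 2 * Real.exp (-2 * δ ^ 2 * n) := by
        have hb := bern_mgf_le hp0 hp1 ht₀
        have hpow : (1 - p + p * Real.exp t₀) ^ n
            ≤ Real.exp (t₀ * p + t₀ ^ 2 / 8) ^ n := pow_le_pow_left₀ hs0 hb n
        have h1 : Real.exp (-t₀ * ((p - δ) * n)) * (1 - p + p * Real.exp t₀) ^ n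
            ≤ Real.exp (-t₀ * ((p - δ) * n)) * Real.exp (t₀ * p + t₀ ^ 2 / 8) ^ n :=
          mul_le_mul_of_nonneg_left hpow (Real.exp_pos _).le
        have h2 : Real.exp (-t₀ * ((p - δ) * n)) * Real.exp (t₀ * p + t₀ ^ 2 / 8) ^ n
            = Real.exp (-2 * δ ^ 2 * n) := by
          rw [← Real.exp_nat_mul, ← Real.exp_add]
          congr 1
          rw [ht₀def]
          ring
        have h3 := Real.exp_pos (-2 * δ ^ 2 * n)
        linarith
      have hset : {ω | (1 / (n : ℝ)) * ∑ i, a i ω ≤ p - δ}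
          = {ω | (∑ i, a i) ω ≤ (p - δ) * n} := by
        ext ω
        simp only [Set.mem_setOf_eq, Finset.sum_apply]
        rw [mul_comm, mul_one_div, div_le_iff₀ hnR]
      rw [hset]
      refine (ENNReal.le_ofReal_iff_toReal_le (measure_ne_top _ _) ?_).2 ?_
      · positivity
      · exact hch.trans hbound
  refine ⟨h₁, le_trans (measure_mono ?_) h₁⟩
  intro ω hω
  simp only [Set.mem_setOf_eq] at hω ⊢
  by_contra hcon
  push_neg at hcon
  apply hω
  rcases Nat.eq_zero_or_pos n with hn0 | hnpos
  · subst hn0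
    simp
  · have hnR : (0:ℝ) < n := by exact_mod_cast hnpos
    set S : ℝ := ∑ i, a i ω with hSdef
    have hS2 : (p - δ) * n ≤ S := by
      have h1 : (p - δ) * n < ((1 / (n : ℝ)) * S) * n :=
        mul_lt_mul_of_pos_right hcon hnR
      have h2 : ((1 / (n : ℝ)) * S) * n = S := by field_simp
      linarith
    have hS1 : S ≤ n := by
      have : S ≤ ∑ _i : Fin n, (1:ℝ) :=
        Finset.sum_le_sum (fun i _ => by rcases hval i ω with h | h <;> simp [h])
      simpa using this
    have hS0 : 0 ≤ S :=
      Finset.sum_nonneg (fun i _ => by rcases hval i ω with h | h <;> simp [h])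
    have hkey : ∀ i j, (P₁ ω i j - P₂ ω i j) ^ 2 ≤ α ^ 2 * (1 - a i ω * a j ω) := by
      intro i j
      obtain ⟨h1l, h1u⟩ := hP₁ ω i j
      obtain ⟨h2l, h2u⟩ := hP₂ ω i j
      rcases hval i ω with hi | hi
      · rw [hi]
        ring_nf
        nlinarith
      · rcases hval j ω with hj | hj
        · rw [hj]
          ring_nf
          nlinarith
        · rw [hagree ω i j hi hj, hi, hj]
          simp
    have hsum : ∑ i, ∑ j, (P₁ ω i j - P₂ ω i j) ^ 2
        ≤ ∑ i : Fin n, ∑ j : Fin n, α ^ 2 * (1 - a i ω * a j ω) :=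
      Finset.sum_le_sum (fun i _ => Finset.sum_le_sum (fun j _ => hkey i j))
    have hsum2 : ∑ i : Fin n, ∑ j : Fin n, α ^ 2 * (1 - a i ω * a j ω)
        = α ^ 2 * ((n:ℝ) ^ 2 - S ^ 2) := by
      have hprod : ∑ i : Fin n, ∑ j : Fin n, a i ω * a j ω = S * S := by
        rw [← Finset.sum_mul_sum]
      have h1 : ∑ i : Fin n, ∑ j : Fin n, α ^ 2 * (1 - a i ω * a j ω)
          = ∑ i : Fin n, ∑ j : Fin n, (α ^ 2 - α ^ 2 * (a i ω * a j ω)) := by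
        apply Finset.sum_congr rfl
        intro i _
        apply Finset.sum_congr rfl
        intro j _
        ring
      rw [h1]
      simp only [Finset.sum_sub_distrib, Finset.sum_const, Finset.card_univ,
        Fintype.card_fin, nsmul_eq_mul, ← Finset.mul_sum]
      ring_nf
      rw [← Finset.sum_mul, ← hSdef]
      ring
    rw [hsum2] at hsum
    have hfin : α ^ 2 * ((n:ℝ) ^ 2 - S ^ 2) ≤ 8 * α ^ 2 * (n:ℝ) ^ 2 * ((1 - p) + δ) := by
      have hA : 0 ≤ (n:ℝ) - S := by linarith
      have hB : (n:ℝ) + S ≤ 2 * n := by linarith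
      have hC : (n:ℝ) - S ≤ n * (1 - p + δ) := by nlinarith
      have hD : ((n:ℝ) - S) * ((n:ℝ) + S) ≤ (n * (1 - p + δ)) * (2 * n) :=
        mul_le_mul hC hB (by linarith) (by nlinarith)
      have hE : 0 ≤ (1 - p + δ) := by linarith
      nlinarith [sq_nonneg α, mul_le_mul_of_nonneg_left hD (sq_nonneg α),
        mul_nonneg (mul_nonneg (sq_nonneg α) (sq_nonneg (n:ℝ))) hE]
    exact hsum.trans hfin
end
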